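/- For every ε ∈ (0,1), the cubic 2y³ − 3y² + b(ε) has three distinct real roots, and y₁(ε) = (2 − 3ε − √(4 − 3ε²))/4 and y₂(ε) = (2 + 3ε − √(4 − 3ε²))/4 are the two smallest of them; the third root is greater than 1. -/
import Mathlib

/-- The parameter `b(ε) = 1/2 − ((1 − 3ε²)/4)·√(4 − 3ε²)` of the Sasaki–Einstein
metric `Y^{p,q}`, with `ε = q/p`. -/
noncomputable def ypqB (ε : ℝ) : ℝ :=
  1/2 - ((1 - 3*ε^2)/4) * Real.sqrt (4 - 3*ε^2)

/-- The endpoint `y₁(ε) = (2 − 3ε − √(4 − 3ε²))/4`. -/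
noncomputable def ypqY1 (ε : ℝ) : ℝ := (2 - 3*ε - Real.sqrt (4 - 3*ε^2))/4

/-- The endpoint `y₂(ε) = (2 + 3ε − √(4 − 3ε²))/4`. -/
noncomputable def ypqY2 (ε : ℝ) : ℝ := (2 + 3*ε - Real.sqrt (4 - 3*ε^2))/4

/-- For every `ε ∈ (0,1)`, the cubic `2y³ − 3y² + b(ε)` has three distinct real
roots; `y₁(ε)` and `y₂(ε)` are the two smallest of them, and the third root is
greater than `1`. -/
theorem ypq_cubic_three_roots :
    ∀ ε ∈ Set.Ioo (0 : ℝ) 1, ∃ y₃ : ℝ,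
      1 < y₃ ∧ ypqY1 ε < ypqY2 ε ∧ ypqY2 ε < y₃ ∧
      ∀ y : ℝ, 2*y^3 - 3*y^2 + ypqB ε = 0 ↔ (y = ypqY1 ε ∨ y = ypqY2 ε ∨ y = y₃) := by
  rintro ε ⟨hε0, hε1⟩
  set s := Real.sqrt (4 - 3*ε^2) with hs
  have hs2 : s^2 = 4 - 3*ε^2 := Real.sq_sqrt (by nlinarith)
  have hsnn : 0 ≤ s := Real.sqrt_nonneg _
  have hs1 : 1 < s := by nlinarith
  have hεs : ε < s := by nlinarith
  refine ⟨(1 + s)/2, by linarith, ?_, ?_, ?_⟩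
  · unfold ypqY1 ypqY2; rw [← hs]; linarith
  · unfold ypqY2; rw [← hs]; linarith
  · intro y
    have key : 2*y^3 - 3*y^2 + ypqB ε
        = 2*(y - ypqY1 ε)*(y - ypqY2 ε)*(y - (1+s)/2) := by
      unfold ypqB ypqY1 ypqY2
      rw [← hs]
      linear_combination (s/16 + 3*y/8 - 3/16) * hs2
    rw [key]
    constructor
    · intro h
      rcases mul_eq_zero.1 h with h' | h
      · rcases mul_eq_zero.1 h' with h' | h
        · rcases mul_eq_zero.1 h' with h | h
          · exact absurd h two_ne_zero
          · exact Or.inl (by linarith [sub_eq_zero.1 h])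
        · exact Or.inr (Or.inl (by linarith [sub_eq_zero.1 h]))
      · exact Or.inr (Or.inr (by linarith [sub_eq_zero.1 h]))
    · rintro (h | h | h) <;> subst h <;> ring
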